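/- Between any two n-expansion Lie algebras there exists at most one homomorphism of n-expansion Lie algebras, and any such homomorphism is surjective. -/

import Mathlib

abbrev F2 := ZMod 2

namespace HigherGenus

abbrev V (ι : Type) := ι → F2

abbrev ML (ι : Type) (i : ℕ) := MultilinearMap F2 (fun _ : Fin i => V ι) F2

variable {ι : Type} [Fintype ι] [DecidableEq ι]

/-- The tensor product of a family of linear functionals, as a multilinear map. -/
noncomputable def funcTensor {i : ℕ} (L : Fin i → (V ι →ₗ[F2] F2)) : ML ι i :=
  (MultilinearMap.mkPiAlgebra F2 (Fin i) F2).compLinearMap L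

/-- `χ_{h 1} ⊗ ⋯ ⊗ χ_{h i}` as a multilinear map. -/
noncomputable def chiTensor (i : ℕ) (h : Fin i → ι) : ML ι i :=
  funcTensor (fun p => LinearMap.proj (h p))

/-- The governing tensor `φ_{(A,x)}`: the sum of `χ_{τ(1)}⊗⋯⊗χ_{τ(i)}` over all bijections
`τ : [i] ≃ A` placing `x` in one of the last two positions. -/
noncomputable def govTensor (i : ℕ) (A : Finset ι) (x : ι) : ML ι i :=
  ∑ τ : Fin i ≃ {a // a ∈ A},
    if ∀ p : Fin i, ((τ p : ι) = x → i ≤ (p : ℕ) + 2) then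
      chiTensor i (fun p => (τ p : ι)) else 0

/-- `Gov(V_B, i)`: the span of the governing tensors supported in `B`. -/
noncomputable def Gov (i : ℕ) (B : Finset ι) : Submodule F2 (ML ι i) :=
  Submodule.span F2
    {φ | ∃ A : Finset ι, ∃ x : ι, A ⊆ B ∧ A.card = i ∧ x ∈ A ∧ φ = govTensor i A x}

/-- `Multi~(V_B, i)`: the span of the injective pure tensors supported in `B`. -/
noncomputable def MultiT (i : ℕ) (B : Finset ι) : Submodule F2 (ML ι i) :=
  Submodule.span F2
    {φ | ∃ τ : Fin i → ι, Function.Injective τ ∧ (∀ p, τ p ∈ B) ∧ φ = chiTensor i τ}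

/-- Evaluation of a multilinear map at a fixed tuple, as a linear map. -/
def mEval {i : ℕ} (σ : Fin i → V ι) : ML ι i →ₗ[F2] F2 where
  toFun b := b σ
  map_add' _ _ := rfl
  map_smul' _ _ := rfl

/-- Plugging the vector `v` into the first slot of a multilinear map. -/
noncomputable def consMapL {i : ℕ} (v : V ι) : ML ι (i + 1) →ₗ[F2] ML ι i :=
  (LinearMap.applyₗ v).comp
    (multilinearCurryLeftEquiv F2 (fun _ : Fin (i + 1) => V ι) F2).toLinearMap

/-- The standard basis vector `e_j`. -/
def stdb (j : ι) : V ι := Pi.single j 1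

/-- The recursively defined subspaces `Cons(V_B, i)`. -/
noncomputable def Cons : (i : ℕ) → Finset ι → Submodule F2 (ML ι i)
  | 0, _ => ⊥
  | 1, B => Gov 1 B
  | 2, B => MultiT 2 B ⊓
      (⨅ σ : Fin 2 → V ι, LinearMap.ker (mEval σ - mEval (σ ∘ (Equiv.swap 0 1))))
  | 3, B => (MultiT 3 B ⊓
      (⨅ j ∈ B, Submodule.comap (consMapL (stdb j)) (Cons 2 (B.erase j)))) ⊓
      (⨅ j₁ : ι, ⨅ j₂ : ι, ⨅ j₃ : ι,
        LinearMap.ker (mEval ![stdb j₁, stdb j₂, stdb j₃]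
          + mEval ![stdb j₃, stdb j₁, stdb j₂] + mEval ![stdb j₂, stdb j₃, stdb j₁]))
  | (i+4), B => (MultiT (i+4) B ⊓
      (⨅ j ∈ B, Submodule.comap (consMapL (stdb j)) (Cons (i+3) (B.erase j)))) ⊓
      (⨅ j₁ : ι, ⨅ j₂ : ι, ⨅ _ : j₁ ≠ j₂,
        LinearMap.ker ((consMapL (stdb j₂)).comp (consMapL (stdb j₁))
          - (consMapL (stdb j₁)).comp (consMapL (stdb j₂))))


/-- The right-nested bracket `[σ_1,[σ_2,[…,[σ_{i−1},σ_i]…]]]`. -/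
def nest {L : Type} [AddCommGroup L] [Module F2 L]
    (br : L →ₗ[F2] L →ₗ[F2] L) : {i : ℕ} → (Fin i → L) → L
  | 0, _ => 0
  | 1, σ => σ 0
  | (_+2), σ => br (σ 0) (nest br (Fin.tail σ))

/-- `(L_•, ψ)` (presented by a bracket `br`, graded pieces `piece m` for `m ≥ 1` with
`piece 0 = ⊥`, and `ψ`) is an expansion Lie algebra over the index set `ι`. -/
structure IsExpLie {ι : Type} [Fintype ι] [DecidableEq ι] {L : Type}
    [AddCommGroup L] [Module F2 L]
    (br : L →ₗ[F2] L →ₗ[F2] L) (piece : ℕ → Submodule F2 L)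
    (ψ : L →ₗ[F2] V ι) : Prop where
  /-- the grading starts in degree 1 -/
  piece_zero : piece 0 = ⊥
  /-- the graded pieces are independent … -/
  indep : iSupIndep piece
  /-- … and give a direct sum decomposition of `L` -/
  span_top : (⨆ m, piece m) = ⊤
  /-- `[L_h, L_k] ⊆ L_{h+k}` -/
  graded : ∀ h k : ℕ, ∀ x ∈ piece h, ∀ y ∈ piece k, br x y ∈ piece (h + k)
  /-- the bracket is alternating -/
  br_self : ∀ x, br x x = 0
  /-- the Jacobi identity -/
  jacobi : ∀ x y z, br x (br y z) + br y (br z x) + br z (br x y) = 0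
  /-- `ψ` is surjective -/
  psi_surj : Function.Surjective ψ
  /-- `ψ` is a homomorphism of graded Lie algebras: it kills brackets
  (the target has the zero bracket) … -/
  psi_br : ∀ x y, ψ (br x y) = 0
  /-- … and it kills every graded piece of degree `≠ 1`
  (the target is concentrated in degree 1) -/
  psi_graded : ∀ m : ℕ, m ≠ 1 → ∀ x ∈ piece m, ψ x = 0
  /-- `ker ψ` is an abelian subalgebra -/
  ker_abelian : ∀ x y, ψ x = 0 → ψ y = 0 → br x y = 0
  /-- `[L_•, L_•] = ker ψ` -/
  comm_eq_ker : Submodule.span F2 {z | ∃ x y, z = br x y} = LinearMap.ker ψ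
  /-- for `i ≥ 4`, nested brackets with entries in `L_1` are unchanged under any permutation
  of the first `i − 2` entries -/
  perm_invariant : ∀ (m : ℕ) (σ : Fin (m + 4) → L), (∀ p, σ p ∈ piece 1) →
    ∀ e : Equiv.Perm (Fin (m + 4)), (∀ p : Fin (m + 4), m + 2 ≤ (p : ℕ) → e p = p) →
    nest br (σ ∘ e) = nest br σ
  /-- for `i ≥ 4`, nested brackets with entries in `L_1` vanish as soon as two of the first
  `i − 2` entries coincide -/
  repeat_vanish : ∀ (m : ℕ) (σ : Fin (m + 4) → L), (∀ p, σ p ∈ piece 1) →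
    (∃ s t : Fin (m + 4), s ≠ t ∧ (s : ℕ) < m + 2 ∧ (t : ℕ) < m + 2 ∧ σ s = σ t) →
    nest br σ = 0
  /-- `[τ_1,[τ_1,τ_2]] = 0` for `τ_1, τ_2 ∈ L_1` with `ψ(τ_1)` a standard basis vector -/
  basis_bracket_sq : ∀ x y : L, x ∈ piece 1 → y ∈ piece 1 →
    (∃ j : ι, ψ x = stdb j) → br x (br x y) = 0

/-- A bundled expansion Lie algebra over the index set `ι`. -/
structure ExpLieAlg (ι : Type) [Fintype ι] [DecidableEq ι] where
  L : Type
  [acg : AddCommGroup L]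
  [mod : Module F2 L]
  br : L →ₗ[F2] L →ₗ[F2] L
  piece : ℕ → Submodule F2 L
  psi : L →ₗ[F2] V ι
  isexp : IsExpLie br piece psi

attribute [instance] ExpLieAlg.acg ExpLieAlg.mod

/-- A homomorphism of expansion Lie algebras: a linear map commuting with the brackets,
preserving the gradings, and compatible with the structure maps `ψ`. -/
def IsExpLieHom {ι : Type} [Fintype ι] [DecidableEq ι] (E E' : ExpLieAlg ι)
    (f : E.L →ₗ[F2] E'.L) : Prop :=
  (∀ x y, f (E.br x y) = E'.br (f x) (f y)) ∧
  (∀ m : ℕ, ∀ x ∈ E.piece m, f x ∈ E'.piece m) ∧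
  (∀ x, E'.psi (f x) = E.psi x)

section General

variable {κ : Type} [Fintype κ] [DecidableEq κ]
variable {L : Type} [AddCommGroup L] [Module F2 L]
variable (br : L →ₗ[F2] L →ₗ[F2] L) (piece : ℕ → Submodule F2 L) (ψ : L →ₗ[F2] V κ)

/-- Span of brackets of graded elements of total degree `m`. -/
def gbr (m : ℕ) : Submodule F2 L :=
  Submodule.span F2 {z | ∃ h k x y, h + k = m ∧ 1 ≤ h ∧ 1 ≤ k ∧
    x ∈ piece h ∧ y ∈ piece k ∧ z = br x y}

variable {br piece ψ}

lemma gbr_le_piece (hE : IsExpLie br piece ψ) (m : ℕ) : gbr br piece m ≤ piece m := by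
  apply Submodule.span_le.2
  rintro z ⟨h, k, x, y, rfl, hh, hk, hx, hy, rfl⟩
  exact hE.graded h k x hx y hy

lemma mem_T (hE : IsExpLie br piece ψ) (x y : L) :
    br x y ∈ ⨆ m, gbr br piece m := by
  have hx : x ∈ ⨆ m, piece m := by rw [hE.span_top]; trivial
  refine Submodule.iSup_induction (motive := fun x => br x y ∈ ⨆ m, gbr br piece m) _ hx ?_ ?_ ?_
  · intro h x hxh
    have hy : y ∈ ⨆ m, piece m := by rw [hE.span_top]; trivial
    refine Submodule.iSup_induction (motive := fun y => br x y ∈ ⨆ m, gbr br piece m) _ hy ?_ ?_ ?_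
    · intro k y hyk
      rcases Nat.eq_zero_or_pos h with hz | hpos
      · subst hz
        rw [hE.piece_zero] at hxh
        simp [(Submodule.mem_bot F2).1 hxh]
      rcases Nat.eq_zero_or_pos k with kz | kpos
      · subst kz
        rw [hE.piece_zero] at hyk
        simp [(Submodule.mem_bot F2).1 hyk]
      exact Submodule.mem_iSup_of_mem (h + k)
        (Submodule.subset_span ⟨h, k, x, y, rfl, hpos, kpos, hxh, hyk, rfl⟩)
    · simp
    · intro a b ha hb
      simpa [map_add] using add_mem ha hb
  · simp
  · intro a b ha hb
    have : br (a + b) y = br a y + br b y := by simp [map_add]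
    rw [this]; exact add_mem ha hb

lemma ker_le_T (hE : IsExpLie br piece ψ) :
    LinearMap.ker ψ ≤ ⨆ m, gbr br piece m := by
  rw [← hE.comm_eq_ker]
  apply Submodule.span_le.2
  rintro z ⟨x, y, rfl⟩
  exact mem_T hE x y

/-- Projection onto the `m`-th graded piece. -/
noncomputable def projm (hI : DirectSum.IsInternal piece) (m : ℕ) : L →ₗ[F2] L :=
  (piece m).subtype ∘ₗ (DirectSum.component F2 ℕ (fun i => (piece i : Submodule F2 L)) m) ∘ₗ
    (LinearEquiv.ofBijective (DirectSum.coeLinearMap piece) hI).symm.toLinearMap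

lemma projm_same (hI : DirectSum.IsInternal piece) {m : ℕ} {x : L} (hx : x ∈ piece m) :
    projm hI m x = x := by
  have := hI.ofBijective_coeLinearMap_of_mem hx
  simp only [projm, LinearMap.coe_comp, Function.comp_apply, LinearEquiv.coe_coe,
    Submodule.coe_subtype, ← DirectSum.apply_eq_component]
  rw [this]

lemma projm_ne (hI : DirectSum.IsInternal piece) {k m : ℕ} (hkm : k ≠ m) {x : L}
    (hx : x ∈ piece k) : projm hI m x = 0 := by
  have := hI.ofBijective_coeLinearMap_of_mem_ne hkm hx
  simp only [projm, LinearMap.coe_comp, Function.comp_apply, LinearEquiv.coe_coe,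
    Submodule.coe_subtype, ← DirectSum.apply_eq_component]
  rw [this]; rfl

lemma piece_inf_ker_le_gbr (hE : IsExpLie br piece ψ) (m : ℕ) :
    piece m ⊓ LinearMap.ker ψ ≤ gbr br piece m := by
  have hI : DirectSum.IsInternal piece :=
    DirectSum.isInternal_submodule_of_iSupIndep_of_iSup_eq_top hE.indep hE.span_top
  rintro z ⟨hzm, hzk⟩
  have hT : z ∈ ⨆ m', gbr br piece m' := ker_le_T hE hzk
  have key : projm hI m z ∈ gbr br piece m := by
    refine Submodule.iSup_induction (motive := fun z => projm hI m z ∈ gbr br piece m) _ hT ?_ ?_ ?_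
    · intro k z hzk'
      rcases eq_or_ne k m with rfl | hne
      · rwa [projm_same hI (gbr_le_piece hE k hzk')]
      · rw [projm_ne hI hne (gbr_le_piece hE k hzk')]; exact zero_mem _
    · simp
    · intro a b ha hb
      rw [map_add]; exact add_mem ha hb
  rwa [projm_same hI hzm] at key

lemma piece1_inf_ker (hE : IsExpLie br piece ψ) :
    piece 1 ⊓ LinearMap.ker ψ = ⊥ := by
  refine le_antisymm (le_trans (piece_inf_ker_le_gbr hE 1) ?_) bot_le
  apply Submodule.span_le.2
  rintro z ⟨h, k, x, y, hm, hh, hk, -, -, rfl⟩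
  omega

/-- `L` is generated as a Lie algebra by its degree-one piece. -/
lemma generation (hE : IsExpLie br piece ψ) (M : Submodule F2 L)
    (h1 : piece 1 ≤ M) (hbr : ∀ x ∈ M, ∀ y ∈ M, br x y ∈ M) : M = ⊤ := by
  have key : ∀ m, piece m ≤ M := by
    intro m
    induction m using Nat.strong_induction_on with
    | _ m ih =>
      match m with
      | 0 => rw [hE.piece_zero]; exact bot_le
      | 1 => exact h1
      | (m + 2) =>
        have hker : piece (m + 2) ≤ LinearMap.ker ψ := fun x hx =>
          LinearMap.mem_ker.2 (hE.psi_graded (m + 2) (by omega) x hx)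
        refine le_trans (fun x hx => piece_inf_ker_le_gbr hE (m + 2) ⟨hx, hker hx⟩) ?_
        apply Submodule.span_le.2
        rintro z ⟨h, k, x, y, hm, hh, hk, hx, hy, rfl⟩
        exact hbr x (ih h (by omega) hx) y (ih k (by omega) hy)
  rw [eq_top_iff, ← hE.span_top]
  exact iSup_le key

lemma psi_piece1 (hE : IsExpLie br piece ψ) (x : L) :
    ∃ x₁ ∈ piece 1, ψ x₁ = ψ x := by
  have hx : x ∈ ⨆ m, piece m := by rw [hE.span_top]; trivial
  refine Submodule.iSup_induction (motive := fun x => ∃ x₁ ∈ piece 1, ψ x₁ = ψ x) _ hx ?_ ?_ ?_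
  · intro k x hxk
    rcases eq_or_ne k 1 with rfl | hne
    · exact ⟨x, hxk, rfl⟩
    · exact ⟨0, zero_mem _, by rw [map_zero, hE.psi_graded k hne x hxk]⟩
  · exact ⟨0, zero_mem _, rfl⟩
  · intro a b ha hb
    obtain ⟨a₁, ha₁, ha₂⟩ := ha
    obtain ⟨b₁, hb₁, hb₂⟩ := hb
    exact ⟨a₁ + b₁, add_mem ha₁ hb₁, by rw [map_add, map_add, ha₂, hb₂]⟩

end General


/-- Between any two `n`-expansion Lie algebras there is at most one homomorphism of
`n`-expansion Lie algebras, and any such homomorphism is surjective. -/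
theorem statement6 (n : ℕ) (E E' : ExpLieAlg (Fin n)) :
    (∀ f g : E.L →ₗ[F2] E'.L, IsExpLieHom E E' f → IsExpLieHom E E' g → f = g) ∧
    (∀ f : E.L →ₗ[F2] E'.L, IsExpLieHom E E' f → Function.Surjective f) := by
  constructor
  · intro f g hf hg
    obtain ⟨hfbr, hfgr, hfψ⟩ := hf
    obtain ⟨hgbr, hggr, hgψ⟩ := hg
    have hM : LinearMap.eqLocus f g = ⊤ := by
      apply generation E.isexp
      · intro x hx
        rw [LinearMap.mem_eqLocus]
        have h1 : f x - g x ∈ E'.piece 1 := sub_mem (hfgr 1 x hx) (hggr 1 x hx)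
        have h2 : f x - g x ∈ LinearMap.ker E'.psi := by
          rw [LinearMap.mem_ker, map_sub, hfψ, hgψ, sub_self]
        have hb : f x - g x ∈ (⊥ : Submodule F2 E'.L) := by
          rw [← piece1_inf_ker E'.isexp]; exact ⟨h1, h2⟩
        exact sub_eq_zero.1 ((Submodule.mem_bot F2).1 hb)
      · intro x hx y hy
        rw [LinearMap.mem_eqLocus] at hx hy ⊢
        rw [hfbr, hgbr, hx, hy]
    exact LinearMap.eqLocus_eq_top.1 hM
  · intro f hf
    obtain ⟨hfbr, hfgr, hfψ⟩ := hf
    have hR : LinearMap.range f = ⊤ := by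
      apply generation E'.isexp
      · intro z hz
        obtain ⟨x, hx⟩ := E.isexp.psi_surj (E'.psi z)
        obtain ⟨x₁, hx₁, hψ₁⟩ := psi_piece1 E.isexp x
        refine ⟨x₁, ?_⟩
        have h1 : z - f x₁ ∈ E'.piece 1 := sub_mem hz (hfgr 1 x₁ hx₁)
        have h2 : z - f x₁ ∈ LinearMap.ker E'.psi := by
          rw [LinearMap.mem_ker, map_sub, hfψ, hψ₁, hx, sub_self]
        have hb : z - f x₁ ∈ (⊥ : Submodule F2 E'.L) := by
          rw [← piece1_inf_ker E'.isexp]; exact ⟨h1, h2⟩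
        exact (sub_eq_zero.1 ((Submodule.mem_bot F2).1 hb)).symm
      · rintro a ⟨x, rfl⟩ b ⟨y, rfl⟩
        exact ⟨E.br x y, hfbr x y⟩
    rw [← LinearMap.range_eq_top]
    exact hR

end HigherGenus
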